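/- Let P, Q, R ∈ B be points of infinite order. If for almost every v ∈ V there exist integers x, y, z with gcd(x, y, z) = 1 and a torsion point T ∈ B_tors (all possibly depending on v) such that x²P + y²Q + z²R = T mod v, then P, Q, R are linearly dependent over ℤ; that is, there exist integers a, b, c, not all zero, with aP + bQ + cR = 0. -/

import Mathlib

/-- If the rank-3 form `x²P + y²Q + z²R` represents a torsion point modulo
almost every `v`, then `P`, `Q`, `R` are linearly dependent over `ℤ`. -/
theorem stmt_3
    {V : Type*} [Infinite V]
    {B : Type*} [AddCommGroup B]
    (Bv : V → Type*) [∀ v, AddCommGroup (Bv v)] [∀ v, Finite (Bv v)]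
    (r : ∀ v : V, B →+ Bv v)
    (htors : {T : B | IsOfFinAddOrder T}.Finite)
    (h1 : ∀ l : ℕ, l.Prime → ∀ (m : ℕ) (Pts : Fin m → B), LinearIndependent ℤ Pts →
      ∀ k : Fin m → ℕ,
        {v : V | ∀ i : Fin m,
          l ^ (k i) ∣ addOrderOf (r v (Pts i)) ∧
          ¬ l ^ (k i + 1) ∣ addOrderOf (r v (Pts i))}.Infinite)
    (h2 : {v : V | ¬ Set.InjOn (r v) {T : B | IsOfFinAddOrder T}}.Finite)
    (P Q R : B) (hP : ¬ IsOfFinAddOrder P) (hQ : ¬ IsOfFinAddOrder Q)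
    (hR : ¬ IsOfFinAddOrder R)
    (h : {v : V | ¬ ∃ (x y z : ℤ) (T : B), Int.gcd x (Int.gcd y z) = 1 ∧
        IsOfFinAddOrder T ∧
        r v (x ^ 2 • P + y ^ 2 • Q + z ^ 2 • R) = r v T}.Finite) :
    ∃ a b c : ℤ, ¬ (a = 0 ∧ b = 0 ∧ c = 0) ∧ a • P + b • Q + c • R = 0 := by
  classical
  by_contra hcon
  push_neg at hcon
  have hindep : ∀ a b c : ℤ, a • P + b • Q + c • R = 0 → a = 0 ∧ b = 0 ∧ c = 0 := by
    intro a b c hsum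
    by_contra hne
    push_neg at hne
    exact hcon a b c hne hsum
  -- a common annihilator of all torsion points
  set N : ℕ := ∏ T ∈ htors.toFinset, addOrderOf T with hNdef
  have hNsmul : ∀ T : B, IsOfFinAddOrder T → N • T = 0 := by
    intro T hT
    exact addOrderOf_dvd_iff_nsmul_eq_zero.mp
      (Finset.dvd_prod_of_mem _ (htors.mem_toFinset.mpr hT))
  have hNpos : 0 < N := Finset.prod_pos (fun T hT => (htors.mem_toFinset.mp hT).addOrderOf_pos)
  -- choose a big odd prime l
  obtain ⟨l, hlge, hl⟩ := Nat.exists_infinite_primes (max N 2 + 1)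
  have hlN : N < l := lt_of_lt_of_le (by omega) hlge
  have hl2 : 2 < l := lt_of_lt_of_le (by omega) hlge
  haveI : Fact l.Prime := ⟨hl⟩
  have hlp : Prime (l : ℤ) := Nat.prime_iff_prime_int.mp hl
  -- choose a quadratic non-residue t0 mod l
  obtain ⟨t0, ht0⟩ := FiniteField.exists_nonsquare (F := ZMod l)
    (by rw [ZMod.ringChar_zmod_n]; omega)
  set ti : ℤ := (t0.val : ℤ) with htidef
  have hticast : ((ti : ℤ) : ZMod l) = t0 := by
    rw [htidef, Int.cast_natCast, ZMod.natCast_val, ZMod.cast_id]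
  -- the auxiliary triple is linearly independent
  have hli : LinearIndependent ℤ ![P, Q + ti • R, R] := by
    apply Fintype.linearIndependent_iff.mpr
    intro g hg
    rw [Fin.sum_univ_three] at hg
    simp only [Matrix.cons_val_zero, Matrix.cons_val_one, Matrix.head_cons,
      Matrix.cons_val_two, Matrix.tail_cons] at hg
    have hg' : g 0 • P + g 1 • Q + (g 1 * ti + g 2) • R = 0 := by
      rw [← hg]; module
    obtain ⟨e0, e1, e2⟩ := hindep _ _ _ hg'
    have e2' : g 2 = 0 := by rw [e1] at e2; simpa using e2
    intro i
    fin_cases i <;> assumption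
  -- choose a good place v
  obtain ⟨v, hvS, hvgood⟩ :=
    ((h1 l hl 3 ![P, Q + ti • R, R] hli ![2, 0, 1]).diff h).nonempty
  have hvall : ∀ i : Fin 3,
      l ^ (![2, 0, 1] i) ∣ addOrderOf (r v (![P, Q + ti • R, R] i)) ∧
      ¬ l ^ (![2, 0, 1] i + 1) ∣ addOrderOf (r v (![P, Q + ti • R, R] i)) := hvS
  obtain ⟨x, y, z, T, hgcd, hT, heq⟩ := not_not.mp hvgood
  -- notation
  set f := r v with hfdef
  have hv0 := hvall 0
  have hv1 := hvall 1
  have hv2 := hvall 2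
  simp only [Matrix.cons_val_zero, Matrix.cons_val_one, Matrix.head_cons,
    Matrix.cons_val_two, Matrix.tail_cons, pow_zero, pow_one, zero_add, one_dvd,
    true_and] at hv0 hv1 hv2
  -- hv0 : l^2 ∣ a ∧ ¬ l^3 ∣ a ; hv1 : ¬ l ∣ b ; hv2 : l ∣ c ∧ ¬ l^2 ∣ c
  obtain ⟨a', haeq⟩ := hv0.1
  have hla' : ¬ l ∣ a' := by
    rintro ⟨k, hk⟩
    exact hv0.2 ⟨k, by rw [haeq, hk]; ring⟩
  have ha'0 : a' ≠ 0 := by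
    rintro rfl
    exact hv0.2 (by rw [haeq]; simp)
  obtain ⟨c', hceq⟩ := hv2.1
  have hlc' : ¬ l ∣ c' := by
    rintro ⟨k, hk⟩
    exact hv2.2 ⟨k, by rw [hceq, hk]; ring⟩
  have hc'0 : c' ≠ 0 := by
    rintro rfl
    exact hv2.2 (by rw [hceq]; simp)
  have hlb : ¬ l ∣ addOrderOf (f (Q + ti • R)) := hv1
  have hlN' : ¬ l ∣ N := fun hd => absurd (Nat.le_of_dvd hNpos hd) (by omega)
  set MM : ℕ := a' * addOrderOf (f (Q + ti • R)) * c' * N with hMMdef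
  -- basic vanishing facts
  have hAz : ((MM : ℕ) : ℤ) • f (Q + ti • R) = 0 := by
    apply addOrderOf_dvd_iff_zsmul_eq_zero.mp
    exact_mod_cast Int.natCast_dvd_natCast.mpr ⟨a' * c' * N, by rw [hMMdef]; ring⟩
  have hTz : ((MM : ℕ) : ℤ) • f T = 0 := by
    apply addOrderOf_dvd_iff_zsmul_eq_zero.mp
    have hNT : N • f T = 0 := by
      rw [← map_nsmul, hNsmul T hT, map_zero]
    have : addOrderOf (f T) ∣ N := addOrderOf_dvd_iff_nsmul_eq_zero.mpr hNT
    exact_mod_cast Int.natCast_dvd_natCast.mpr (this.trans ⟨a' * addOrderOf (f (Q + ti • R)) * c', by rw [hMMdef]; ring⟩)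
  have hA2 : (((MM : ℕ) : ℤ) * y ^ 2) • (f Q + ti • f R) = 0 := by
    have hAv : f (Q + ti • R) = f Q + ti • f R := by
      rw [map_add, map_zsmul]
    rw [← hAv, mul_comm, mul_smul, hAz, smul_zero]
  have eq0 : x ^ 2 • f P + y ^ 2 • f Q + z ^ 2 • f R = f T := by
    simpa only [map_add, map_zsmul] using heq
  -- the key relation
  have key : (((MM : ℕ) : ℤ) * x ^ 2) • f P
      + (((MM : ℕ) : ℤ) * (z ^ 2 - ti * y ^ 2)) • f R = 0 := by
    have expand : (((MM : ℕ) : ℤ) * x ^ 2) • f P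
        + (((MM : ℕ) : ℤ) * (z ^ 2 - ti * y ^ 2)) • f R
        = ((MM : ℕ) : ℤ) • (x ^ 2 • f P + y ^ 2 • f Q + z ^ 2 • f R)
          - (((MM : ℕ) : ℤ) * y ^ 2) • (f Q + ti • f R) := by
      module
    rw [expand, eq0, hTz, hA2, sub_zero]
  -- multiply by l ; the R-term dies, so a ∣ l * MM * x², giving l ∣ x
  have hc2 : ((l : ℤ) * (((MM : ℕ) : ℤ) * (z ^ 2 - ti * y ^ 2))) • f R = 0 := by
    apply addOrderOf_dvd_iff_zsmul_eq_zero.mp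
    rw [hceq, hMMdef]
    exact ⟨((a' * addOrderOf (f (Q + ti • R)) * N : ℕ) : ℤ) * (z ^ 2 - ti * y ^ 2), by
      push_cast; ring⟩
  have key2 : ((l : ℤ) * (((MM : ℕ) : ℤ) * x ^ 2)) • f P = 0 := by
    have h' := congrArg (fun w => (l : ℤ) • w) key
    simp only [smul_add, smul_smul, smul_zero] at h'
    rw [hc2, add_zero] at h'
    exact h'
  have ha_dvd : ((addOrderOf (f P) : ℕ) : ℤ) ∣ (l : ℤ) * (((MM : ℕ) : ℤ) * x ^ 2) :=
    addOrderOf_dvd_iff_zsmul_eq_zero.mpr key2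
  have hbcN : ¬ l ∣ addOrderOf (f (Q + ti • R)) * c' * N := by
    intro hdd
    rcases (Nat.Prime.dvd_mul hl).mp hdd with hdd | hdd
    · rcases (Nat.Prime.dvd_mul hl).mp hdd with hdd | hdd
      · exact hlb hdd
      · exact hlc' hdd
    · exact hlN' hdd
  have hlx : (l : ℤ) ∣ x := by
    have h5 : ((l : ℤ) * (a' : ℤ)) * (l : ℤ)
        ∣ ((l : ℤ) * (a' : ℤ)) * (((addOrderOf (f (Q + ti • R)) * c' * N : ℕ) : ℤ) * x ^ 2) := by
      have e1 : ((l : ℤ) * (a' : ℤ)) * (l : ℤ) = ((addOrderOf (f P) : ℕ) : ℤ) := by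
        rw [haeq]; push_cast; ring
      have e2 : ((l : ℤ) * (a' : ℤ)) * (((addOrderOf (f (Q + ti • R)) * c' * N : ℕ) : ℤ) * x ^ 2)
          = (l : ℤ) * (((MM : ℕ) : ℤ) * x ^ 2) := by
        rw [hMMdef]; push_cast; ring
      rw [e1, e2]; exact ha_dvd
    have hne : ((l : ℤ) * (a' : ℤ)) ≠ 0 := by
      have : (l : ℤ) ≠ 0 := by exact_mod_cast hl.ne_zero
      have : (a' : ℤ) ≠ 0 := by exact_mod_cast ha'0
      positivity
    have h6 : (l : ℤ) ∣ ((addOrderOf (f (Q + ti • R)) * c' * N : ℕ) : ℤ) * x ^ 2 :=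
      (mul_dvd_mul_iff_left hne).mp h5
    rcases hlp.dvd_mul.mp h6 with hd | hd
    · exact absurd (Int.natCast_dvd_natCast.mp hd) hbcN
    · exact hlp.dvd_of_dvd_pow hd
  -- then the P-term dies in `key`, so c ∣ MM * (z² - t y²), giving l ∣ z² - t y²
  obtain ⟨x0, hx0⟩ := id hlx
  have hPz : (((MM : ℕ) : ℤ) * x ^ 2) • f P = 0 := by
    apply addOrderOf_dvd_iff_zsmul_eq_zero.mp
    rw [haeq, hMMdef, hx0]
    exact ⟨((addOrderOf (f (Q + ti • R)) * c' * N : ℕ) : ℤ) * x0 ^ 2, by push_cast; ring⟩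
  have hRz : (((MM : ℕ) : ℤ) * (z ^ 2 - ti * y ^ 2)) • f R = 0 := by
    rw [hPz, zero_add] at key
    exact key
  have hcd : ((addOrderOf (f R) : ℕ) : ℤ) ∣ ((MM : ℕ) : ℤ) * (z ^ 2 - ti * y ^ 2) :=
    addOrderOf_dvd_iff_zsmul_eq_zero.mpr hRz
  have hla'bN : ¬ l ∣ a' * addOrderOf (f (Q + ti • R)) * N := by
    intro hdd
    rcases (Nat.Prime.dvd_mul hl).mp hdd with hdd | hdd
    · rcases (Nat.Prime.dvd_mul hl).mp hdd with hdd | hdd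
      · exact hla' hdd
      · exact hlb hdd
    · exact hlN' hdd
  have hlzy : (l : ℤ) ∣ z ^ 2 - ti * y ^ 2 := by
    have h7 : ((c' : ℤ)) * ((l : ℤ))
        ∣ ((c' : ℤ)) * (((a' * addOrderOf (f (Q + ti • R)) * N : ℕ) : ℤ) * (z ^ 2 - ti * y ^ 2)) := by
      have e1 : ((c' : ℤ)) * (l : ℤ) = ((addOrderOf (f R) : ℕ) : ℤ) := by
        rw [hceq]; push_cast; ring
      have e2 : ((c' : ℤ)) * (((a' * addOrderOf (f (Q + ti • R)) * N : ℕ) : ℤ) * (z ^ 2 - ti * y ^ 2))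
          = ((MM : ℕ) : ℤ) * (z ^ 2 - ti * y ^ 2) := by
        rw [hMMdef]; push_cast; ring
      rw [e1, e2]; exact hcd
    have hne : ((c' : ℤ)) ≠ 0 := by exact_mod_cast hc'0
    have h8 : (l : ℤ) ∣ ((a' * addOrderOf (f (Q + ti • R)) * N : ℕ) : ℤ) * (z ^ 2 - ti * y ^ 2) :=
      (mul_dvd_mul_iff_left hne).mp h7
    rcases hlp.dvd_mul.mp h8 with hd | hd
    · exact absurd (Int.natCast_dvd_natCast.mp hd) hla'bN
    · exact hd
  -- l cannot divide y (else l ∣ x, y, z contradicts the gcd condition)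
  have hly : ¬ (l : ℤ) ∣ y := by
    intro hy
    have hz : (l : ℤ) ∣ z := by
      apply hlp.dvd_of_dvd_pow (n := 2)
      have e : z ^ 2 = (z ^ 2 - ti * y ^ 2) + ti * y ^ 2 := by ring
      rw [e]
      exact dvd_add hlzy ((dvd_pow hy (by norm_num)).mul_left ti)
    have hd1 : (l : ℤ) ∣ (Int.gcd y z : ℤ) := Int.dvd_coe_gcd hy hz
    have hd2 : (l : ℤ) ∣ (Int.gcd x (Int.gcd y z) : ℤ) := Int.dvd_coe_gcd hlx hd1
    rw [hgcd] at hd2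
    have : (l : ℤ) ≤ 1 := Int.le_of_dvd one_pos (by exact_mod_cast hd2)
    have : (2 : ℤ) ≤ (l : ℤ) := by exact_mod_cast hl.two_le
    omega
  -- conclude: t0 is a square mod l, contradiction
  apply ht0
  have h8 : ((z ^ 2 - ti * y ^ 2 : ℤ) : ZMod l) = 0 :=
    (ZMod.intCast_zmod_eq_zero_iff_dvd _ _).mpr hlzy
  rw [Int.cast_sub, Int.cast_mul, Int.cast_pow, Int.cast_pow, hticast] at h8
  have hyne : ((y : ℤ) : ZMod l) ≠ 0 := fun h0' =>
    hly ((ZMod.intCast_zmod_eq_zero_iff_dvd _ _).mp h0')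
  refine ⟨((z : ℤ) : ZMod l) * (((y : ℤ) : ZMod l))⁻¹, ?_⟩
  field_simp
  linear_combination -h8
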